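/- arXiv:2209.12327 — 2 statements merged into one kernel-verified Lean document; each statement's English description precedes it below -/
import Mathlib

section
/- Let G be a graph, let (T, (X_t : t ∈ V(T))) be a tree-decomposition of G of width at most w, and for each i ≥ 1 let Y_i ⊆ V(T), let T_i be a subtree of T with Y_i ⊆ V(T_i), and let E_i be a set of at most k pairs of vertices of ⋃_{x ∈ Y_i} X_x. Define Z_i as the set of vertices appearing in some pair of E_i, and X'_t := X_t ∪ ⋃_{i : t ∈ V(T_i)} Z_i. Suppose every node of T lies in at most h of the subtrees T_i. Then (T, (X'_t : t ∈ V(T))) is a tree-decomposition of the graph G' with V(G') = V(G) and E(G') = E(G) ∪ ⋃_i E_i, and it has width at most w + 2hk. Moreover X'_t ⊇ X_t for every t. -/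
open SimpleGraph Set

/-- A tree-decomposition of `G`: a tree `H` with bags `X t ⊆ V`. -/
structure TreeDecomp {V T : Type} (G : SimpleGraph V) (H : SimpleGraph T)
    (X : T → Set V) : Prop where
  tree : H.IsTree
  covers : ∀ v : V, ∃ t, v ∈ X t
  coversEdge : ∀ ⦃u v : V⦄, G.Adj u v → ∃ t, u ∈ X t ∧ v ∈ X t
  subtree : ∀ v : V, (H.induce {t | v ∈ X t}).Connected

/-- A layering of `G`, given by the layer index of each vertex: endpoints of
an edge lie in the same or consecutive layers. -/
def IsLayering {V : Type} (G : SimpleGraph V) (L : V → ℕ) : Prop :=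
  ∀ ⦃u v⦄, G.Adj u v → L u = L v ∨ L u + 1 = L v ∨ L v + 1 = L u

/-- The monochromatic component of `v` under coloring `c`: vertices of color
`c v` reachable from `v` in the subgraph induced by the color class of `v`. -/
def monoComp {V S : Type} (G : SimpleGraph V) (c : V → S) (v : V) : Set V :=
  {u | ∃ h : c u = c v, (G.induce {w | c w = c v}).Reachable ⟨u, h⟩ ⟨v, rfl⟩}

/-- A coloring has clustering `η` if every monochromatic component has at most
`η` vertices. -/
def HasClustering {V S : Type} (G : SimpleGraph V) (c : V → S) (η : ℕ) : Prop :=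
  ∀ v, (monoComp G c v).encard ≤ (η : ℕ∞)

/-- The connected component of `v` in the subgraph of `G` induced by `s`. -/
def compIn {V : Type} (G : SimpleGraph V) (s : Set V) (v : V) : Set V :=
  {x | ∃ (hx : x ∈ s) (hv : v ∈ s), (G.induce s).Reachable ⟨x, hx⟩ ⟨v, hv⟩}

/-- The external neighborhood `N_G(s)` of a vertex set `s`. -/
def nbrSet {V : Type} (G : SimpleGraph V) (s : Set V) : Set V :=
  {x | x ∉ s ∧ ∃ y ∈ s, G.Adj y x}


lemma reach_mono {T : Type} (H : SimpleGraph T) {s t : Set T} (hst : s ⊆ t) {u v : T}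
    (hu : u ∈ s) (hv : v ∈ s) (h : (H.induce s).Reachable ⟨u, hu⟩ ⟨v, hv⟩) :
    (H.induce t).Reachable ⟨u, hst hu⟩ ⟨v, hst hv⟩ := by
  let f : H.induce s →g H.induce t := ⟨Set.inclusion hst, fun {a b} hab => hab⟩
  exact h.map f

lemma connected_union {T ι : Type} (H : SimpleGraph T) (A : Set T) (B : ι → Set T)
    (P : ι → Prop) (hA : (H.induce A).Connected)
    (hB : ∀ i, P i → (H.induce (B i)).Connected)
    (hmeet : ∀ i, P i → (B i ∩ A).Nonempty) :
    (H.induce (A ∪ ⋃ i ∈ {i | P i}, B i)).Connected := by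
  set U : Set T := A ∪ ⋃ i ∈ {i | P i}, B i with hU
  obtain ⟨⟨a0, ha0⟩⟩ := hA.nonempty
  have hAU : A ⊆ U := Set.subset_union_left
  have key : ∀ x (hx : x ∈ U), (H.induce U).Reachable ⟨x, hx⟩ ⟨a0, hAU ha0⟩ := by
    intro x hx
    rcases hx with hxA | hxB
    · exact reach_mono H hAU hxA ha0 (hA.preconnected _ _)
    · simp only [Set.mem_iUnion] at hxB
      obtain ⟨i, hPi, hxi⟩ := hxB
      obtain ⟨p, hpB, hpA⟩ := hmeet i hPi
      have hBU : B i ⊆ U := by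
        intro z hz; exact Or.inr (Set.mem_iUnion.2 ⟨i, Set.mem_iUnion.2 ⟨hPi, hz⟩⟩)
      have r1 := reach_mono H hBU hxi hpB ((hB i hPi).preconnected _ _)
      have r2 := reach_mono H hAU hpA ha0 (hA.preconnected _ _)
      exact r1.trans r2
  rw [SimpleGraph.connected_iff]
  exact ⟨fun x y => (key x.1 x.2).trans (key y.1 y.2).symm, ⟨⟨a0, hAU ha0⟩⟩⟩

lemma encard_biUnion_le {ι α : Type} {I : Set ι} (hI : I.Finite) (f : ι → Set α)
    (n : ℕ∞) (hf : ∀ i, (f i).encard ≤ n) :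
    (⋃ i ∈ I, f i).encard ≤ I.encard * n := by
  refine Set.Finite.induction_on (motive := fun I _ => (⋃ i ∈ I, f i).encard ≤ I.encard * n) I hI (by simp) ?_
  intro a s ha hs ih
  rw [Set.biUnion_insert, Set.encard_insert_of_notMem ha]
  calc (f a ∪ ⋃ i ∈ s, f i).encard ≤ (f a).encard + (⋃ i ∈ s, f i).encard :=
        Set.encard_union_le _ _
    _ ≤ n + s.encard * n := add_le_add (hf a) ih
    _ = (s.encard + 1) * n := by ring

theorem stmt_4 {V T : Type} (w k h : ℕ)
    (G : SimpleGraph V)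
    (H : SimpleGraph T) (X : T → Set V) (hTD : TreeDecomp G H X)
    (hw : ∀ t, (X t).encard ≤ (w : ℕ∞) + 1)
    (Y : ℕ → Set T) (St : ℕ → Set T) (E : ℕ → Set (Sym2 V))
    (hsub : ∀ i, (H.induce (St i)).Connected) (hY : ∀ i, Y i ⊆ St i)
    (hE : ∀ i, (E i).encard ≤ (k : ℕ∞))
    (hEloc : ∀ i, ∀ e ∈ E i, ∀ v ∈ e, ∃ x ∈ Y i, v ∈ X x)
    (hdiag : ∀ i, ∀ e ∈ E i, ¬ e.IsDiag)
    (hh : ∀ t : T, {i | t ∈ St i}.encard ≤ (h : ℕ∞))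
    (G' : SimpleGraph V)
    (hG' : ∀ u v, G'.Adj u v ↔ G.Adj u v ∨ (u ≠ v ∧ ∃ i, s(u, v) ∈ E i))
    (Z : ℕ → Set V) (hZ : ∀ i, Z i = {v | ∃ e ∈ E i, v ∈ e})
    (X' : T → Set V) (hX' : ∀ t, X' t = X t ∪ ⋃ i ∈ {i | t ∈ St i}, Z i) :
    TreeDecomp G' H X' ∧ (∀ t, (X' t).encard ≤ (w : ℕ∞) + 2 * h * k + 1) ∧
      (∀ t, X t ⊆ X' t) := by
  have hXX' : ∀ t, X t ⊆ X' t := fun t => (hX' t) ▸ Set.subset_union_left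
  have hZmem : ∀ i v, v ∈ Z i ↔ ∃ e ∈ E i, v ∈ e := fun i v => by rw [hZ i]; rfl
  have hZbag : ∀ i v, v ∈ Z i → ∃ x ∈ Y i, v ∈ X x := by
    intro i v hv
    rw [hZ i] at hv
    obtain ⟨e, he, hve⟩ := hv
    exact hEloc i e he v hve
  have hZsub : ∀ i t, t ∈ St i → Z i ⊆ X' t := by
    intro i t ht v hv
    rw [hX' t]
    exact Or.inr (Set.mem_iUnion.2 ⟨i, Set.mem_iUnion.2 ⟨ht, hv⟩⟩)
  refine ⟨⟨hTD.tree, ?_, ?_, ?_⟩, ?_, hXX'⟩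
  · intro v
    obtain ⟨t, ht⟩ := hTD.covers v
    exact ⟨t, hXX' t ht⟩
  · intro u v huv
    rcases (hG' u v).1 huv with hGuv | ⟨hne, i, he⟩
    · obtain ⟨t, h1, h2⟩ := hTD.coversEdge hGuv
      exact ⟨t, hXX' t h1, hXX' t h2⟩
    · have hu : u ∈ Z i := (hZmem i u).2 ⟨_, he, Sym2.mem_mk_left u v⟩
      have hv : v ∈ Z i := (hZmem i v).2 ⟨_, he, Sym2.mem_mk_right u v⟩
      obtain ⟨x, hxY, _⟩ := hZbag i u hu
      exact ⟨x, hZsub i x (hY i hxY) hu, hZsub i x (hY i hxY) hv⟩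
  · intro v
    have hset : {t | v ∈ X' t} = {t | v ∈ X t} ∪ ⋃ i ∈ {i | v ∈ Z i}, St i := by
      ext t
      simp only [Set.mem_setOf_eq, hX' t, Set.mem_union, Set.mem_iUnion]
      constructor
      · rintro (hv | hv)
        · exact Or.inl hv
        · obtain ⟨i, hti, hvi⟩ := hv
          exact Or.inr ⟨i, hvi, hti⟩
      · rintro (hv | ⟨i, hvi, hti⟩)
        · exact Or.inl hv
        · exact Or.inr ⟨i, hti, hvi⟩
    rw [hset]
    exact connected_union H _ St (fun i => v ∈ Z i) (hTD.subtree v) (fun i _ => hsub i)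
      (fun i hvi => (hZbag i v hvi).elim fun x hx => ⟨x, hY i hx.1, hx.2⟩)
  · intro t
    have hsym : ∀ e : Sym2 V, ({v | v ∈ e} : Set V).encard ≤ 2 := by
      intro e
      induction e with
      | _ a b =>
        have h1 : ({v | v ∈ s(a, b)} : Set V) = {a, b} := by
          ext v; simp [Sym2.mem_iff]
        rw [h1]
        exact (Set.encard_insert_le _ _).trans (by simp [one_add_one_eq_two])
    have hZcard : ∀ i, (Z i).encard ≤ 2 * (k : ℕ∞) := by
      intro i
      have hEq : Z i = ⋃ e ∈ E i, {v | v ∈ e} := by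
        ext v; simp [hZ i]
      rw [hEq]
      calc (⋃ e ∈ E i, {v | v ∈ e}).encard ≤ (E i).encard * 2 :=
            encard_biUnion_le (Set.finite_of_encard_le_coe (hE i)) _ 2 (fun e => hsym e)
        _ ≤ (k : ℕ∞) * 2 := mul_le_mul_left (hE i) 2
        _ = 2 * (k : ℕ∞) := mul_comm _ _
    have hIfin : {i | t ∈ St i}.Finite := Set.finite_of_encard_le_coe (hh t)
    calc (X' t).encard ≤ (X t).encard + (⋃ i ∈ {i | t ∈ St i}, Z i).encard := by
          rw [hX' t]; exact Set.encard_union_le _ _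
      _ ≤ ((w : ℕ∞) + 1) + {i | t ∈ St i}.encard * (2 * (k : ℕ∞)) :=
          add_le_add (hw t) (encard_biUnion_le hIfin _ _ hZcard)
      _ ≤ ((w : ℕ∞) + 1) + (h : ℕ∞) * (2 * (k : ℕ∞)) :=
          add_le_add_right (mul_le_mul_left (hh t) _) _
      _ = (w : ℕ∞) + 2 * (h : ℕ∞) * (k : ℕ∞) + 1 := by ring
end

section
/- Let G be a graph, U_1, U_2 a partition of a vertex set containing V(D) for a connected subgraph D of G, and let G_2 be a graph on U_2 containing all edges of G[U_2] and additionally, for every connected component C of D[V(D) ∩ U_1], all pairs of distinct vertices of N_G(V(C)) ∩ U_2. Then G_2[V(D) ∩ U_2] is connected (assuming V(D) ∩ U_2 ≠ ∅). -/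
open SimpleGraph Set

lemma compIn_refl' {V : Type} (G : SimpleGraph V) {s : Set V} {v : V} (hv : v ∈ s) :
    v ∈ compIn G s v := ⟨hv, hv, Reachable.refl _⟩

lemma compIn_eq_of_adj' {V : Type} (G : SimpleGraph V) {s : Set V} {c d : V}
    (hc : c ∈ s) (hd : d ∈ s) (h : G.Adj c d) : compIn G s c = compIn G s d := by
  have hadj : (G.induce s).Adj ⟨c, hc⟩ ⟨d, hd⟩ := by simpa using h
  ext x
  constructor <;> rintro ⟨hx, hv, hr⟩
  · exact ⟨hx, hd, hr.trans hadj.reachable⟩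
  · exact ⟨hx, hc, hr.trans hadj.symm.reachable⟩

lemma firstU2' {V : Type} (G : SimpleGraph V) (U1 U2 : Set V) (hdisj : Disjoint U1 U2)
    (D : Set V) (hDsub : D ⊆ U1 ∪ U2) :
    ∀ {c b : ↥D} (W : (G.induce D).Walk c b), c.1 ∈ U1 → b.1 ∈ U2 →
      ∃ (w : ↥D) (W' : (G.induce D).Walk w b), W'.length < W.length ∧ w.1 ∈ U2 ∧
        ∃ y ∈ compIn G (D ∩ U1) c.1, G.Adj y w.1 := by
  intro c b W
  induction W with
  | nil =>
    intro hc hb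
    exact absurd hb (Set.disjoint_left.mp hdisj hc)
  | cons h W ih =>
    rename_i c d b
    intro hc hb
    have hGad : G.Adj c.1 d.1 := by simpa using h
    by_cases hd : d.1 ∈ U2
    · exact ⟨d, W, by simp, hd, c.1, compIn_refl' G ⟨c.2, hc⟩, hGad⟩
    · have hd1 : d.1 ∈ U1 := (hDsub d.2).resolve_right hd
      obtain ⟨w, W', hlt, hw, y, hy, hadj⟩ := ih hd1 hb
      refine ⟨w, W', by simp; omega, hw, y, ?_, hadj⟩
      rw [compIn_eq_of_adj' G (show c.1 ∈ D ∩ U1 from ⟨c.2, hc⟩) (show d.1 ∈ D ∩ U1 from ⟨d.2, hd1⟩) hGad]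
      exact hy

lemma keyLem' {V : Type} (G : SimpleGraph V) (U1 U2 : Set V) (hdisj : Disjoint U1 U2)
    (D : Set V) (hDsub : D ⊆ U1 ∪ U2) (G2 : SimpleGraph V)
    (hG2G : ∀ ⦃u v⦄, u ∈ U2 → v ∈ U2 → G.Adj u v → G2.Adj u v)
    (hclique : ∀ v₀ ∈ D ∩ U1, ∀ u v, u ≠ v → u ∈ U2 → v ∈ U2 →
      u ∈ nbrSet G (compIn G (D ∩ U1) v₀) → v ∈ nbrSet G (compIn G (D ∩ U1) v₀) →
      G2.Adj u v) :
    ∀ (n : ℕ) (a b : ↥D) (W : (G.induce D).Walk a b), W.length ≤ n →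
      ∀ (ha : a.1 ∈ U2) (hb : b.1 ∈ U2),
      (G2.induce (D ∩ U2)).Reachable ⟨a.1, a.2, ha⟩ ⟨b.1, b.2, hb⟩ := by
  have hnotin : ∀ z ∈ U2, ∀ v₀, z ∉ compIn G (D ∩ U1) v₀ := by
    rintro z hz v₀ ⟨⟨-, hz1⟩, -, -⟩
    exact Set.disjoint_left.mp hdisj hz1 hz
  intro n
  induction n with
  | zero =>
    intro a b W hW ha hb
    cases W with
    | nil => exact Reachable.refl _
    | cons h W' => simp at hW
  | succ n ih =>
    intro a b W hW ha hb
    cases W with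
    | nil => exact Reachable.refl _
    | cons h W' =>
      rename_i d
      have hGad : G.Adj a.1 d.1 := by simpa using h
      have hWlen : W'.length ≤ n := by simp at hW; omega
      by_cases hd : d.1 ∈ U2
      · have e : G2.Adj a.1 d.1 := hG2G ha hd hGad
        have e2 : (G2.induce (D ∩ U2)).Adj ⟨a.1, a.2, ha⟩ ⟨d.1, d.2, hd⟩ := by simpa using e
        exact e2.reachable.trans (ih d b W' hWlen hd hb)
      · have hd1 : d.1 ∈ U1 := (hDsub d.2).resolve_right hd
        obtain ⟨w, W'', hlt, hw, y, hy, hadjyw⟩ :=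
          firstU2' G U1 U2 hdisj D hDsub W' hd1 hb
        have hreach := ih w b W'' (by omega) hw hb
        by_cases heq : a.1 = w.1
        · have hsub : (⟨a.1, a.2, ha⟩ : ↥(D ∩ U2)) = ⟨w.1, w.2, hw⟩ := Subtype.ext heq
          rw [hsub]; exact hreach
        · have hA : a.1 ∈ nbrSet G (compIn G (D ∩ U1) d.1) :=
            ⟨hnotin _ ha _, d.1, compIn_refl' G ⟨d.2, hd1⟩, hGad.symm⟩
          have hB : w.1 ∈ nbrSet G (compIn G (D ∩ U1) d.1) :=
            ⟨hnotin _ hw _, y, hy, hadjyw⟩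
          have e : G2.Adj a.1 w.1 := hclique d.1 ⟨d.2, hd1⟩ a.1 w.1 heq ha hw hA hB
          have e2 : (G2.induce (D ∩ U2)).Adj ⟨a.1, a.2, ha⟩ ⟨w.1, w.2, hw⟩ := by simpa using e
          exact e2.reachable.trans hreach

theorem stmt_9 {V : Type} (G : SimpleGraph V) (U1 U2 : Set V) (hdisj : Disjoint U1 U2)
    (D : Set V) (hDconn : (G.induce D).Connected) (hDsub : D ⊆ U1 ∪ U2)
    (G2 : SimpleGraph V)
    (hG2verts : ∀ ⦃u v⦄, G2.Adj u v → u ∈ U2 ∧ v ∈ U2)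
    (hG2G : ∀ ⦃u v⦄, u ∈ U2 → v ∈ U2 → G.Adj u v → G2.Adj u v)
    (hclique : ∀ v₀ ∈ D ∩ U1, ∀ u v, u ≠ v → u ∈ U2 → v ∈ U2 →
      u ∈ nbrSet G (compIn G (D ∩ U1) v₀) → v ∈ nbrSet G (compIn G (D ∩ U1) v₀) →
      G2.Adj u v)
    (hne : (D ∩ U2).Nonempty) :
    (G2.induce (D ∩ U2)).Connected := by
  have := hne.to_subtype
  refine ⟨fun x y => ?_⟩
  obtain ⟨x, hxD, hxU⟩ := x
  obtain ⟨y, hyD, hyU⟩ := y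
  obtain ⟨W⟩ := hDconn.preconnected ⟨x, hxD⟩ ⟨y, hyD⟩
  exact keyLem' G U1 U2 hdisj D hDsub G2 hG2G hclique W.length _ _ W le_rfl hxU hyU
end
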